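/- arXiv:0910.4695 — 3 statements merged into one kernel-verified Lean document; each statement's English description precedes it below -/
import Mathlib

section
/- If a semi-direct product of the form (Z/ℓZ)^b ⋊ Z/pZ is a quasi-p group, then b ≥ ord_p(ℓ), the multiplicative order of ℓ modulo p. -/
/-- If a semidirect product `(Z/ℓZ)^b ⋊ Z/pZ` is a quasi-`p` group, then
`b ≥ ord_p(ℓ)`, the multiplicative order of `ℓ` modulo `p`. -/
theorem stmt_5 (p ℓ b : ℕ) [Fact p.Prime] [Fact ℓ.Prime] (hne : p ≠ ℓ) (hb : 0 < b)
    (ι : Multiplicative (ZMod p) →* MulAut (Multiplicative (Fin b → ZMod ℓ)))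
    (hquasi : (⨆ P : Sylow p (Multiplicative (Fin b → ZMod ℓ) ⋊[ι] Multiplicative (ZMod p)),
        (P : Subgroup (Multiplicative (Fin b → ZMod ℓ) ⋊[ι] Multiplicative (ZMod p)))) = ⊤) :
    orderOf (ℓ : ZMod p) ≤ b := by
  classical
  have hp : p.Prime := Fact.out
  have hl : ℓ.Prime := Fact.out
  set N := Multiplicative (Fin b → ZMod ℓ) with hNdef
  set G := N ⋊[ι] Multiplicative (ZMod p) with hGdef
  -- every element of N has order dividing ℓ
  have hexp : ∀ n : N, n ^ ℓ = 1 := by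
    intro n
    apply Multiplicative.toAdd.injective
    rw [toAdd_pow, toAdd_one]
    funext i
    simp [nsmul_eq_mul, ZMod.natCast_self]
  -- the subgroup of N generated by elements ι s v / v
  set S : Set N := {x | ∃ s v, ι s v * v⁻¹ = x} with hSdef
  set W : Subgroup N := Subgroup.closure S with hWdef
  have hWinv : ∀ (s : Multiplicative (ZMod p)) (n : N), n ∈ W → ι s n ∈ W := by
    intro s n hn
    have : ι s n = (ι s n * n⁻¹) * n := (inv_mul_cancel_right _ _).symm
    rw [this]
    exact mul_mem (Subgroup.subset_closure ⟨s, n, rfl⟩) hn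
  -- the subgroup K of G
  set K : Subgroup G :=
    { carrier := {g : G | g.left ∈ W}
      one_mem' := by
        simp only [Set.mem_setOf_eq, SemidirectProduct.one_left]
        exact one_mem W
      mul_mem' := by
        intro a c ha hc
        simp only [Set.mem_setOf_eq, SemidirectProduct.mul_left] at *
        exact mul_mem ha (hWinv _ _ hc)
      inv_mem' := by
        intro a ha
        simp only [Set.mem_setOf_eq, SemidirectProduct.inv_left] at *
        exact hWinv _ _ (inv_mem ha) } with hKdef
  -- key power computation
  have hpow : ∀ (g : G) (m : ℕ), (g ^ m).left * (g.left ^ m)⁻¹ ∈ W := by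
    intro g m
    induction m with
    | zero => simp only [pow_zero, SemidirectProduct.one_left, mul_inv_cancel]; exact (show (1:N) * 1⁻¹ ∈ W by rw [mul_inv_cancel]; exact one_mem W)
    | succ m ih =>
      rw [pow_succ, pow_succ, SemidirectProduct.mul_left, mul_inv,
        show (g ^ m).left * ι ((g ^ m).right) g.left * ((g.left ^ m)⁻¹ * g.left⁻¹)
          = ((g ^ m).left * (g.left ^ m)⁻¹) * (ι ((g ^ m).right) g.left * g.left⁻¹) by
            rw [← mul_mul_mul_comm]]
      exact mul_mem ih (Subgroup.subset_closure ⟨(g ^ m).right, g.left, rfl⟩)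
  -- every Sylow p-subgroup is contained in K
  have hK : ∀ P : Sylow p G, (P : Subgroup G) ≤ K := by
    intro P g hg
    obtain ⟨k, hk⟩ := P.isPGroup' ⟨g, hg⟩
    have hk' : g ^ p ^ k = 1 := by
      have := congrArg (Subtype.val) hk
      simpa using this
    have h1 : (g.left ^ p ^ k)⁻¹ ∈ W := by
      have := hpow g (p ^ k)
      rwa [hk', SemidirectProduct.one_left, one_mul] at this
    have h2 : g.left ^ p ^ k ∈ W := (inv_mem_iff).mp h1
    have hcop : IsCoprime ((p ^ k : ℕ) : ℤ) ((ℓ : ℕ) : ℤ) := by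
      rw [Nat.isCoprime_iff_coprime]
      exact Nat.Coprime.pow_left k ((Nat.coprime_primes hp hl).mpr hne)
    obtain ⟨u, v, huv⟩ := hcop
    have h3 : g.left = (g.left ^ (p ^ k)) ^ u * (g.left ^ ℓ) ^ v := by
      rw [← zpow_natCast g.left (p ^ k), ← zpow_natCast g.left ℓ, ← zpow_mul, ← zpow_mul,
        ← zpow_add, show ((p ^ k : ℕ) : ℤ) * u + (ℓ : ℤ) * v = 1 by
          rw [mul_comm _ u, mul_comm _ v]; exact_mod_cast huv, zpow_one]
    show g.left ∈ W
    rw [h3, hexp g.left, one_zpow, mul_one]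
    exact zpow_mem h2 u
  -- hence W = everything
  have hWtop : ∀ n : N, n ∈ W := by
    intro n
    have htop : (⊤ : Subgroup G) ≤ K := hquasi ▸ iSup_le hK
    have := htop (Subgroup.mem_top (SemidirectProduct.inl n : G))
    exact this
  -- the "norm" homomorphism
  set ψ : N →* N := ∏ s : Multiplicative (ZMod p), (ι s : N →* N) with hψdef
  have hψeval : ∀ n : N, ψ n = ∏ s : Multiplicative (ZMod p), ι s n := by
    intro n
    rw [hψdef, MonoidHom.finset_prod_apply]
    rfl
  have hψtriv : ∀ n : N, ψ n = 1 := by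
    have hker : W ≤ ψ.ker := by
      rw [hWdef]
      apply (Subgroup.closure_le _).mpr
      rintro x ⟨s, w, rfl⟩
      simp only [SetLike.mem_coe, MonoidHom.mem_ker, map_mul, map_inv]
      have : ψ (ι s w) = ψ w := by
        rw [hψeval, hψeval]
        calc ∏ t : Multiplicative (ZMod p), ι t (ι s w)
            = ∏ t : Multiplicative (ZMod p), ι (t * s) w := by
              refine Finset.prod_congr rfl fun t _ => ?_
              rw [map_mul ι t s]; rfl
          _ = ∏ t : Multiplicative (ZMod p), ι t w :=
              Equiv.prod_comp (Equiv.mulRight s) (fun t => ι t w)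
      rw [this]; exact (congrArg (ψ w * ·) (map_inv ψ w)).trans (mul_inv_cancel _)
    intro n
    exact hker (hWtop n)
  -- the action of Z/p on N via ι
  letI : MulAction (Multiplicative (ZMod p)) N := MulAction.compHom N ι
  have hsmul : ∀ (s : Multiplicative (ZMod p)) (n : N), s • n = ι s n := fun s n => rfl
  have hPG : IsPGroup p (Multiplicative (ZMod p)) := by
    apply IsPGroup.of_card (n := 1)
    rw [pow_one, Nat.card_congr Multiplicative.toAdd, Nat.card_zmod]
  -- fixed points are trivial
  have hcardp : Fintype.card (Multiplicative (ZMod p)) = p := by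
    haveI : NeZero p := ⟨hp.ne_zero⟩
    rw [Fintype.card_multiplicative, ZMod.card]
  have hfix : ∀ x : N, x ∈ MulAction.fixedPoints (Multiplicative (ZMod p)) N → x = 1 := by
    intro x hx
    have hall : ∀ s, ι s x = x := fun s => hx s
    have hxp : x ^ p = 1 := by
      have h := hψtriv x
      rw [hψeval] at h
      rw [Finset.prod_congr rfl (fun s _ => hall s), Finset.prod_const, Finset.card_univ,
        hcardp] at h
      exact h
    have h1 : orderOf x ∣ p := orderOf_dvd_of_pow_eq_one hxp
    have h2 : orderOf x ∣ ℓ := orderOf_dvd_of_pow_eq_one (hexp x)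
    have : orderOf x ∣ 1 := ((Nat.coprime_primes hp hl).mpr hne) ▸ Nat.dvd_gcd h1 h2
    exact orderOf_eq_one_iff.mp (Nat.dvd_one.mp this)
  have hfixcard : Nat.card (MulAction.fixedPoints (Multiplicative (ZMod p)) N) = 1 := by
    rw [Nat.card_eq_one_iff_unique]
    constructor
    · constructor
      intro a c
      ext
      rw [hfix a a.2, hfix c c.2]
    · exact ⟨⟨1, fun s => by rw [hsmul]; exact map_one (ι s)⟩⟩
  -- counting
  have hmod := hPG.card_modEq_card_fixedPoints N
  rw [hfixcard] at hmod
  have hcardN : Nat.card N = ℓ ^ b := by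
    rw [Nat.card_congr Multiplicative.toAdd, Nat.card_eq_fintype_card, Fintype.card_fun,
      ZMod.card, Fintype.card_fin]
  rw [hcardN] at hmod
  have : ((ℓ ^ b : ℕ) : ZMod p) = ((1 : ℕ) : ZMod p) := (ZMod.natCast_eq_natCast_iff _ _ _).mpr hmod
  push_cast at this
  exact Nat.le_of_dvd hb (orderOf_dvd_of_pow_eq_one this)
end

section
/- Let p and ℓ be distinct primes and a = ord_p(ℓ). Any semi-direct product G = (Z/ℓZ)^a ⋊_ι Z/pZ with ι injective is a quasi-p group, i.e., G is generated by its Sylow p-subgroups. -/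
set_option maxHeartbeats 1000000

open Multiplicative

private lemma stmt7_card_mult_zmod (n : ℕ) : Nat.card (Multiplicative (ZMod n)) = n := by
  rw [Nat.card_congr (toAdd (α := ZMod n))]
  exact Nat.card_zmod n

private lemma stmt7_fix (p ℓ a : ℕ) [Fact p.Prime] [Fact ℓ.Prime] (hne : p ≠ ℓ)
    (ha : a = orderOf (ℓ : ZMod p))
    (ι : Multiplicative (ZMod p) →* MulAut (Multiplicative (Fin a → ZMod ℓ)))
    (hι : Function.Injective ι)
    (x : Multiplicative (Fin a → ZMod ℓ))
    (hx : ι (ofAdd 1) x = x) : x = 1 := by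
  haveI : NeZero p := ⟨(Fact.out : p.Prime).pos.ne'⟩
  haveI : Fact (1 < p) := ⟨(Fact.out : p.Prime).one_lt⟩
  letI : MulAction (Multiplicative (ZMod p)) (Multiplicative (Fin a → ZMod ℓ)) :=
    MulAction.compHom _ ι
  have smul_def : ∀ (h : Multiplicative (ZMod p)) (y : Multiplicative (Fin a → ZMod ℓ)),
      h • y = ι h y := fun _ _ => rfl
  set σ : Multiplicative (ZMod p) := ofAdd (1 : ZMod p) with hσ
  have hgen : ∀ h : Multiplicative (ZMod p), h = σ ^ (h.toAdd).val := by
    intro h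
    have h1 : (σ ^ (h.toAdd).val).toAdd = ((h.toAdd).val : ZMod p) := by
      rw [toAdd_pow]
      simp [hσ, nsmul_eq_mul]
    have h2 : ((h.toAdd).val : ZMod p) = h.toAdd := ZMod.natCast_rightInverse h.toAdd
    apply toAdd.injective
    rw [h1, h2]
  have hfixedmem : ∀ y : Multiplicative (Fin a → ZMod ℓ), ι σ y = y →
      y ∈ MulAction.fixedPoints (Multiplicative (ZMod p)) (Multiplicative (Fin a → ZMod ℓ)) := by
    intro y hy
    rw [MulAction.mem_fixedPoints]
    intro h
    rw [smul_def, hgen h, map_pow]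
    generalize (h.toAdd).val = n
    induction n with
    | zero => simp
    | succ n ih => rw [pow_succ, MulAut.mul_apply, hy, ih]
  let U : Subgroup (Multiplicative (Fin a → ZMod ℓ)) :=
    { carrier := MulAction.fixedPoints (Multiplicative (ZMod p)) (Multiplicative (Fin a → ZMod ℓ))
      one_mem' := fun h => by rw [smul_def]; exact map_one _
      mul_mem' := fun {y z} hy hz h => by
        rw [smul_def, map_mul]
        have hy' := hy h
        have hz' := hz h
        rw [smul_def] at hy' hz'
        rw [hy', hz']
      inv_mem' := fun {y} hy h => by
        rw [smul_def, map_inv]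
        have hy' := hy h
        rw [smul_def] at hy'
        rw [hy'] }
  have hcardX : Nat.card (Multiplicative (Fin a → ZMod ℓ)) = ℓ ^ a := by
    rw [Nat.card_congr (toAdd (α := Fin a → ZMod ℓ)), Nat.card_fun]
    simp [Nat.card_zmod]
  have hpH : IsPGroup p (Multiplicative (ZMod p)) := IsPGroup.of_card (n := 1)
    (by rw [pow_one]; exact stmt7_card_mult_zmod p)
  have hmod := hpH.card_modEq_card_fixedPoints (Multiplicative (Fin a → ZMod ℓ))
  have hUdvd : Nat.card U ∣ ℓ ^ a := hcardX ▸ Subgroup.card_subgroup_dvd_card U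
  obtain ⟨β, hβa, hUcard⟩ := (Nat.dvd_prime_pow (Fact.out : ℓ.Prime)).mp hUdvd
  have hcardfix : Nat.card (MulAction.fixedPoints (Multiplicative (ZMod p))
      (Multiplicative (Fin a → ZMod ℓ))) = ℓ ^ β := by
    rw [← hUcard]; rfl
  rw [hcardX, hcardfix] at hmod
  -- p ∣ ℓ ^ a - ℓ ^ β
  have hle : ℓ ^ β ≤ ℓ ^ a :=
    Nat.pow_le_pow_right (Fact.out : ℓ.Prime).pos hβa
  have hdvd1 : p ∣ ℓ ^ a - ℓ ^ β := (Nat.modEq_iff_dvd' hle).mp hmod.symm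
  have hfactor : ℓ ^ a - ℓ ^ β = ℓ ^ β * (ℓ ^ (a - β) - 1) := by
    rw [Nat.mul_sub, mul_one, ← pow_add, Nat.add_sub_cancel' hβa]
  rw [hfactor] at hdvd1
  have hpnotl : ¬ p ∣ ℓ ^ β := by
    intro hcon
    have := (Nat.Prime.dvd_of_dvd_pow (Fact.out : p.Prime) hcon)
    exact hne ((Nat.prime_dvd_prime_iff_eq Fact.out Fact.out).mp this)
  have hdvd2 : p ∣ ℓ ^ (a - β) - 1 :=
    ((Nat.Prime.dvd_mul Fact.out).mp hdvd1).resolve_left hpnotl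
  have hone : (1 : ℕ) ≤ ℓ ^ (a - β) := Nat.one_le_pow _ _ (Fact.out : ℓ.Prime).pos
  have hmod2 : (1 : ℕ) ≡ ℓ ^ (a - β) [MOD p] := (Nat.modEq_iff_dvd' hone).mpr hdvd2
  have hcast : ((ℓ : ZMod p)) ^ (a - β) = 1 := by
    have := (ZMod.natCast_eq_natCast_iff _ _ _).mpr hmod2.symm
    push_cast at this
    exact this
  have hadvd : a ∣ a - β := by
    have := orderOf_dvd_of_pow_eq_one hcast
    rwa [← ha] at this
  have hβ0 : β = a ∨ β = 0 := by
    rcases Nat.eq_zero_or_pos (a - β) with h0 | hpos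
    · left; omega
    · right
      have := Nat.le_of_dvd hpos hadvd
      omega
  rcases hβ0 with hβ | hβ
  · -- fixed points are everything: ι σ = 1, contradiction with injectivity
    exfalso
    have hUtop : U = ⊤ := by
      apply (Subgroup.card_eq_iff_eq_top U).mp
      rw [hUcard, hβ, hcardX]
    have hall : ∀ y : Multiplicative (Fin a → ZMod ℓ), ι σ y = y := by
      intro y
      have hy : y ∈ U := hUtop ▸ Subgroup.mem_top y
      have := (MulAction.mem_fixedPoints.mp hy) σ
      rwa [smul_def] at this
    have : ι σ = 1 := by
      apply MulEquiv.ext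
      intro y
      rw [hall y]
      rfl
    have hσ1 : σ = 1 := hι (by rw [this, map_one])
    have : (1 : ZMod p) = 0 := by
      have := congrArg toAdd hσ1
      simpa [hσ] using this
    exact one_ne_zero this
  · have hUbot : U = ⊥ := Subgroup.card_eq_one.mp (by rw [hUcard, hβ, pow_zero])
    have hxU : x ∈ U := hfixedmem x hx
    rwa [hUbot, Subgroup.mem_bot] at hxU

/-- For distinct primes `p ≠ ℓ` with `a = ord_p(ℓ)`, any semidirect product
`(Z/ℓZ)^a ⋊_ι Z/pZ` with `ι` injective is a quasi-`p` group. -/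
theorem stmt_7 (p ℓ a : ℕ) [Fact p.Prime] [Fact ℓ.Prime] (hne : p ≠ ℓ)
    (ha : a = orderOf (ℓ : ZMod p))
    (ι : Multiplicative (ZMod p) →* MulAut (Multiplicative (Fin a → ZMod ℓ)))
    (hι : Function.Injective ι) :
    (⨆ P : Sylow p (Multiplicative (Fin a → ZMod ℓ) ⋊[ι] Multiplicative (ZMod p)),
        (P : Subgroup (Multiplicative (Fin a → ZMod ℓ) ⋊[ι] Multiplicative (ZMod p)))) = ⊤ := by
  classical
  haveI : Finite (Multiplicative (Fin a → ZMod ℓ) ⋊[ι] Multiplicative (ZMod p)) :=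
    Finite.of_equiv (Multiplicative (Fin a → ZMod ℓ) × Multiplicative (ZMod p))
      ⟨fun q => ⟨q.1, q.2⟩, fun x => (x.left, x.right), fun q => rfl, fun x => rfl⟩
  set N := (⨆ P : Sylow p (Multiplicative (Fin a → ZMod ℓ) ⋊[ι] Multiplicative (ZMod p)),
      (P : Subgroup (Multiplicative (Fin a → ZMod ℓ) ⋊[ι] Multiplicative (ZMod p)))) with hN
  have hNnormal : N.Normal := by
    constructor
    intro n hn g
    refine Subgroup.iSup_induction _ (C := fun y => g * y * g⁻¹ ∈ N) hn ?_ ?_ ?_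
    · intro P x hx
      have h1 : ((g • P : Sylow p (Multiplicative (Fin a → ZMod ℓ) ⋊[ι] Multiplicative (ZMod p))) :
          Subgroup (Multiplicative (Fin a → ZMod ℓ) ⋊[ι] Multiplicative (ZMod p))) ≤ N := by
        rw [hN]
        exact le_iSup
          (fun Q : Sylow p (Multiplicative (Fin a → ZMod ℓ) ⋊[ι] Multiplicative (ZMod p)) =>
            (Q : Subgroup (Multiplicative (Fin a → ZMod ℓ) ⋊[ι] Multiplicative (ZMod p)))) (g • P)
      apply h1
      rw [Sylow.coe_subgroup_smul]
      exact Subgroup.smul_mem_pointwise_smul x (MulAut.conj g) P hx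
    · simpa using N.one_mem
    · intro x y hx hy
      have hxy : g * (x * y) * g⁻¹ = (g * x * g⁻¹) * (g * y * g⁻¹) := by group
      rw [hxy]; exact N.mul_mem hx hy
  have hinrN : ∀ h : Multiplicative (ZMod p),
      (SemidirectProduct.inr h :
        Multiplicative (Fin a → ZMod ℓ) ⋊[ι] Multiplicative (ZMod p)) ∈ N := by
    have hcard : Nat.card (SemidirectProduct.inr (φ := ι) :
        Multiplicative (ZMod p) →* _).range = p ^ 1 := by
      rw [pow_one,
        Nat.card_congr (MonoidHom.ofInjective SemidirectProduct.inr_injective).toEquiv.symm]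
      exact stmt7_card_mult_zmod p
    obtain ⟨Q, hQ⟩ := (IsPGroup.of_card hcard).exists_le_sylow
    intro h
    have hQle : (Q : Subgroup (Multiplicative (Fin a → ZMod ℓ) ⋊[ι] Multiplicative (ZMod p))) ≤ N := by
      rw [hN]
      exact le_iSup
        (fun P : Sylow p (Multiplicative (Fin a → ZMod ℓ) ⋊[ι] Multiplicative (ZMod p)) =>
          (P : Subgroup (Multiplicative (Fin a → ZMod ℓ) ⋊[ι] Multiplicative (ZMod p)))) Q
    exact hQle (hQ ⟨h, rfl⟩)
  set σ : Multiplicative (ZMod p) := ofAdd (1 : ZMod p) with hσ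
  let F : Multiplicative (Fin a → ZMod ℓ) →* Multiplicative (Fin a → ZMod ℓ) :=
    MonoidHom.mk' (fun w => w * (ι σ w)⁻¹) (by
      intro u v
      show (u * v) * (ι σ (u * v))⁻¹ = (u * (ι σ u)⁻¹) * (v * (ι σ v)⁻¹)
      rw [map_mul, mul_inv]
      exact mul_mul_mul_comm u v _ _)
  have hFinj : Function.Injective F := by
    intro u v huv
    have h1 : F (u * v⁻¹) = 1 := by rw [map_mul, map_inv, huv, mul_inv_cancel]
    have h2 : (u * v⁻¹) * (ι σ (u * v⁻¹))⁻¹ = 1 := h1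
    rw [mul_inv_eq_one] at h2
    have h3 := stmt7_fix p ℓ a hne ha ι hι _ h2.symm
    rwa [mul_inv_eq_one] at h3
  have hFsurj : Function.Surjective F := Finite.injective_iff_surjective.mp hFinj
  have hinlN : ∀ w : Multiplicative (Fin a → ZMod ℓ),
      (SemidirectProduct.inl w :
        Multiplicative (Fin a → ZMod ℓ) ⋊[ι] Multiplicative (ZMod p)) ∈ N := by
    intro w
    obtain ⟨u, hu⟩ := hFsurj w
    have h1 : (SemidirectProduct.inr σ :
        Multiplicative (Fin a → ZMod ℓ) ⋊[ι] Multiplicative (ZMod p)) ∈ N := hinrN σ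
    have h2 := hNnormal.conj_mem _ h1 (SemidirectProduct.inl u)
    have h3 := N.mul_mem h2 (N.inv_mem h1)
    have key : SemidirectProduct.inl u * SemidirectProduct.inr σ *
        (SemidirectProduct.inl u)⁻¹ * (SemidirectProduct.inr σ)⁻¹ =
        (SemidirectProduct.inl w :
          Multiplicative (Fin a → ZMod ℓ) ⋊[ι] Multiplicative (ZMod p)) := by
      have e1 : (SemidirectProduct.inl u :
          Multiplicative (Fin a → ZMod ℓ) ⋊[ι] Multiplicative (ZMod p))⁻¹ =
          SemidirectProduct.inl u⁻¹ := by rw [map_inv]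
      have e2 : (SemidirectProduct.inr σ :
          Multiplicative (Fin a → ZMod ℓ) ⋊[ι] Multiplicative (ZMod p))⁻¹ =
          SemidirectProduct.inr σ⁻¹ := by rw [map_inv]
      rw [e1, e2, mul_assoc, mul_assoc, ← mul_assoc (SemidirectProduct.inr σ),
        ← SemidirectProduct.inl_aut, ← map_mul]
      congr 1
      rw [map_inv]
      exact hu
    rw [← key]
    exact h3
  rw [eq_top_iff]
  intro x _
  rw [← SemidirectProduct.inl_left_mul_inr_right x]
  exact N.mul_mem (hinlN _) (hinrN _)
end

section
/- Let p and ℓ be distinct primes with p dividing |GL_a(F_ℓ)| where a = ord_p(ℓ). If N is a normal subgroup of a non-abelian semi-direct product G = (Z/ℓZ)^a ⋊ Z/pZ whose index [G:N] is relatively prime to p, then N = G. -/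
open Polynomial in
lemma aux_fixed (p ℓ a : ℕ) [Fact p.Prime] [Fact ℓ.Prime] (hne : p ≠ ℓ)
    (ha : a = orderOf (ℓ : ZMod p))
    (T : Module.End (ZMod ℓ) (Fin a → ZMod ℓ))
    (hTp : T ^ p = 1) (hT1 : T ≠ 1) :
    Function.Surjective (fun v => T v - v) := by
  have hp : p.Prime := Fact.out
  have hl : ℓ.Prime := Fact.out
  -- reduce to injectivity
  have hinj : Function.Injective (T - LinearMap.id : Module.End (ZMod ℓ) (Fin a → ZMod ℓ)) := by
    rw [← LinearMap.ker_eq_bot, LinearMap.ker_eq_bot']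
    intro v hv
    simp only [LinearMap.sub_apply, LinearMap.id_apply, sub_eq_zero] at hv
    -- hv : T v = v ; show v = 0
    by_contra hv0
    set m := minpoly (ZMod ℓ) T with hm
    have hXp0 : (X ^ p - 1 : (ZMod ℓ)[X]) ≠ 0 := by
      have := X_pow_sub_C_ne_zero (R := ZMod ℓ) hp.pos (1 : ZMod ℓ)
      simpa using this
    have hmdvd : m ∣ (X ^ p - 1 : (ZMod ℓ)[X]) := by
      apply minpoly.dvd
      simp [map_pow, aeval_X, hTp]
    have hm0 : m ≠ 0 := fun h => hXp0 (by simpa [h] using hmdvd)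
    have hpl : (p : ZMod ℓ) ≠ 0 := by
      intro h
      rw [ZMod.natCast_eq_zero_iff] at h
      exact hne ((Nat.prime_dvd_prime_iff_eq hl hp).mp h).symm
    have hsep : (X ^ p - 1 : (ZMod ℓ)[X]).Separable :=
      X_pow_sub_one_separable_iff.mpr hpl
    have msep : m.Separable := hsep.of_dvd hmdvd
    have msf : Squarefree m := msep.squarefree
    -- 1 is an eigenvalue
    have heig : T.HasEigenvalue 1 :=
      Module.End.hasEigenvalue_of_hasEigenvector
        ⟨Module.End.mem_eigenspace_iff.mpr (by simpa using hv), hv0⟩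
    have hroot : m.IsRoot 1 := Module.End.hasEigenvalue_iff_isRoot.mp heig
    obtain ⟨m₂, hm₂⟩ := (dvd_iff_isRoot).mpr hroot
    have hm₂0 : m₂ ≠ 0 := fun h => hm0 (by rw [hm₂, h, mul_zero])
    have hm₂u : ¬ IsUnit m₂ := by
      intro hu
      obtain ⟨c, hc, hcm⟩ := Polynomial.isUnit_iff.mp hu
      have h2 : (T - 1) * (algebraMap (ZMod ℓ) (Module.End (ZMod ℓ) (Fin a → ZMod ℓ))) c = 0 := by
        have h5 := minpoly.aeval (ZMod ℓ) T
        rw [← hm, hm₂, ← hcm] at h5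
        simpa [map_sub, map_mul, aeval_X, aeval_C] using h5
      obtain ⟨u, hu⟩ := hc.map (algebraMap (ZMod ℓ) (Module.End (ZMod ℓ) (Fin a → ZMod ℓ)))
      have h3 : T - 1 = 0 := by
        have h4 := congrArg (fun x => x * (↑u⁻¹ : Module.End (ZMod ℓ) (Fin a → ZMod ℓ))) h2
        simpa [← hu, mul_assoc] using h4
      exact hT1 (by rwa [sub_eq_zero] at h3)
    obtain ⟨g₂, hg₂irr, hg₂dvd⟩ := WfDvdMonoid.exists_irreducible_factor hm₂u hm₂0
    have hX1nm₂ : ¬ (X - C (1 : ZMod ℓ)) ∣ m₂ := by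
      intro h
      have : (X - C (1 : ZMod ℓ)) * (X - C 1) ∣ m := by
        rw [hm₂]; exact mul_dvd_mul_left _ h
      exact (Polynomial.not_isUnit_X_sub_C _) (msf _ this)
    have hg₂X1 : ¬ g₂ ∣ (X - C (1 : ZMod ℓ)) := by
      intro h
      exact hX1nm₂ (((hg₂irr.associated_of_dvd (irreducible_X_sub_C 1) h)).symm.dvd.trans hg₂dvd)
    haveI : Fact (Irreducible g₂) := ⟨hg₂irr⟩
    set F := AdjoinRoot g₂
    set r : F := AdjoinRoot.root g₂ with hr
    have hg₂m : g₂ ∣ m := hg₂dvd.trans ⟨X - C 1, by rw [hm₂]; ring⟩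
    have hrp : r ^ p = 1 := by
      have : AdjoinRoot.mk g₂ (X ^ p - 1) = 0 :=
        AdjoinRoot.mk_eq_zero.mpr (hg₂m.trans hmdvd)
      have h2 : r ^ p - 1 = 0 := by
        simpa [map_sub, map_pow, AdjoinRoot.mk_X] using this
      linear_combination h2
    have hr1 : r ≠ 1 := by
      intro h
      apply hg₂X1
      rw [← AdjoinRoot.mk_eq_zero]
      simp only [map_sub, AdjoinRoot.mk_X, map_one, ← hr, h, sub_self]
    have hordr : orderOf r = p := orderOf_eq_prime hrp hr1
    have hg₂0 : g₂ ≠ 0 := hg₂irr.ne_zero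
    haveI : Module.Finite (ZMod ℓ) F := (AdjoinRoot.powerBasis hg₂0).finite
    haveI : Finite F := Module.finite_of_finite (ZMod ℓ)
    haveI : Fintype F := Fintype.ofFinite F
    have hr0 : r ≠ 0 := by
      intro h
      rw [h, zero_pow hp.ne_zero] at hrp
      exact zero_ne_one hrp
    have hcardF : Fintype.card F = ℓ ^ g₂.natDegree := by
      rw [Module.card_eq_pow_finrank (K := ZMod ℓ) (V := F), ZMod.card,
        (AdjoinRoot.powerBasis hg₂0).finrank, AdjoinRoot.powerBasis_dim]
    have hpdvd : p ∣ ℓ ^ g₂.natDegree - 1 := by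
      rw [← hordr, ← hcardF]
      exact orderOf_dvd_of_pow_eq_one (FiniteField.pow_card_sub_one_eq_one r hr0)
    set d := g₂.natDegree with hd
    have hone_le : 1 ≤ ℓ ^ d := Nat.one_le_pow _ _ hl.pos
    have hcast : ((ℓ : ZMod p)) ^ d = 1 := by
      have h0 : ((ℓ ^ d - 1 : ℕ) : ZMod p) = 0 :=
        (ZMod.natCast_eq_zero_iff _ _).mpr hpdvd
      rw [Nat.cast_sub hone_le] at h0
      push_cast at h0
      linear_combination h0
    have had : a ∣ d := ha ▸ orderOf_dvd_of_pow_eq_one hcast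
    have hd0 : 0 < d := hg₂irr.natDegree_pos
    have hale : a ≤ d := Nat.le_of_dvd hd0 had
    -- degree bounds
    have hchar0 : (LinearMap.charpoly T) ≠ 0 := (LinearMap.charpoly_monic T).ne_zero
    have hmle : m.natDegree ≤ a := by
      have := Polynomial.natDegree_le_of_dvd (LinearMap.minpoly_dvd_charpoly T) hchar0
      rwa [LinearMap.charpoly_natDegree, Module.finrank_pi, Fintype.card_fin] at this
    have hm₂d : d ≤ m₂.natDegree := Polynomial.natDegree_le_of_dvd hg₂dvd hm₂0
    have hmdeg : m.natDegree = 1 + m₂.natDegree := by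
      rw [hm₂, Polynomial.natDegree_mul (X_sub_C_ne_zero 1) hm₂0, natDegree_X_sub_C]
    omega
  have : Function.Injective (T - LinearMap.id : Module.End (ZMod ℓ) (Fin a → ZMod ℓ)) := hinj
  have hsurj := (LinearMap.injective_iff_surjective).mp this
  intro w
  obtain ⟨v, hv⟩ := hsurj w
  exact ⟨v, by simpa [LinearMap.sub_apply] using hv⟩

/-- For distinct primes `p ≠ ℓ` with `p ∣ |GL_a(F_ℓ)|` where `a = ord_p(ℓ)`: if `N` is a
normal subgroup of a non-abelian semidirect product `G = (Z/ℓZ)^a ⋊_ι Z/pZ` whose index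
is relatively prime to `p`, then `N = G`. -/
theorem stmt_8 (p ℓ a : ℕ) [Fact p.Prime] [Fact ℓ.Prime] (hne : p ≠ ℓ)
    (ha : a = orderOf (ℓ : ZMod p)) (hdvd : p ∣ Nat.card (GL (Fin a) (ZMod ℓ)))
    (ι : Multiplicative (ZMod p) →* MulAut (Multiplicative (Fin a → ZMod ℓ)))
    (hι : Function.Injective ι)
    (N : Subgroup (Multiplicative (Fin a → ZMod ℓ) ⋊[ι] Multiplicative (ZMod p)))
    (hN : N.Normal) (hind : Nat.Coprime N.index p) :
    N = ⊤ := by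
  have hp : p.Prime := Fact.out
  haveI : Fact (1 < p) := ⟨hp.one_lt⟩
  set G := Multiplicative (Fin a → ZMod ℓ) ⋊[ι] Multiplicative (ZMod p) with hG
  let π : G →* G ⧸ N := QuotientGroup.mk' N
  have hind0 : N.index ≠ 0 := by
    intro h
    rw [h, Nat.coprime_zero_left] at hind
    exact hp.one_lt.ne' hind
  haveI : Finite (G ⧸ N) := Nat.finite_of_card_ne_zero (by
    rwa [← Subgroup.index_eq_card])
  -- every g^p = 1 in Multiplicative (ZMod p)
  have hgp : ∀ g : Multiplicative (ZMod p), g ^ p = 1 := by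
    intro g
    have h : Multiplicative.toAdd (g ^ p) = Multiplicative.toAdd (1 : Multiplicative (ZMod p)) := by
      simp [toAdd_pow, nsmul_eq_mul, ZMod.natCast_self]
    exact Multiplicative.toAdd.injective h
  -- inr g ∈ N for all g
  have hinr : ∀ g : Multiplicative (ZMod p), (SemidirectProduct.inr g : G) ∈ N := by
    intro g
    have h1 : orderOf (π (SemidirectProduct.inr g)) ∣ p :=
      orderOf_dvd_of_pow_eq_one (by rw [← map_pow, ← map_pow, hgp, map_one, map_one])
    have h2 : orderOf (π (SemidirectProduct.inr g)) ∣ N.index := by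
      rw [Subgroup.index_eq_card]
      exact orderOf_dvd_natCard _
    have h3 : orderOf (π (SemidirectProduct.inr g)) = 1 := by
      have h4 := Nat.dvd_gcd h2 h1
      rwa [Nat.Coprime.gcd_eq_one hind, Nat.dvd_one] at h4
    exact (QuotientGroup.eq_one_iff _).mp (orderOf_eq_one_iff.mp h3)
  -- pick g₀ ≠ 1
  set g₀ : Multiplicative (ZMod p) := Multiplicative.ofAdd 1 with hg₀def
  have hg₀ : g₀ ≠ 1 := by
    intro h
    have : (1 : ZMod p) = 0 := by simpa [hg₀def] using congrArg Multiplicative.toAdd h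
    exact one_ne_zero this
  -- linear endomorphism from ι g₀
  set e : (Fin a → ZMod ℓ) ≃+ (Fin a → ZMod ℓ) :=
    MulEquiv.toAdditive ((ι g₀ : Multiplicative (Fin a → ZMod ℓ) ≃* Multiplicative (Fin a → ZMod ℓ))) with he
  set T : Module.End (ZMod ℓ) (Fin a → ZMod ℓ) :=
    AddMonoidHom.toZModLinearMap ℓ e.toAddMonoidHom with hT
  have hTapp : ∀ v : Fin a → ZMod ℓ, T v = ((ι g₀) (Multiplicative.ofAdd v)).toAdd := fun _ => rfl
  have hTn : ∀ (n : ℕ) (v : Fin a → ZMod ℓ),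
      (T ^ n) v = ((ι g₀ ^ n) (Multiplicative.ofAdd v)).toAdd := by
    intro n
    induction n with
    | zero => intro v; simp
    | succ n ih =>
      intro v
      rw [pow_succ, pow_succ, Module.End.mul_apply, ih, hTapp]
      simp [MulAut.mul_apply]
  have hTp : T ^ p = 1 := by
    apply LinearMap.ext
    intro v
    rw [hTn p v, ← map_pow, hgp, map_one]
    simp
  have hT1 : T ≠ 1 := by
    intro h
    apply hg₀
    apply hι
    rw [map_one]
    ext x : 1
    have := congrArg (fun f : Module.End (ZMod ℓ) (Fin a → ZMod ℓ) => f x.toAdd) h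
    simp only [hTapp, Module.End.one_apply] at this
    simpa using congrArg Multiplicative.ofAdd this
  have hsurj := aux_fixed p ℓ a hne ha T hTp hT1
  -- inl w ∈ N for all w
  have hinl : ∀ w : Multiplicative (Fin a → ZMod ℓ), (SemidirectProduct.inl w : G) ∈ N := by
    intro w
    obtain ⟨v, hv⟩ := hsurj w.toAdd
    set u : Multiplicative (Fin a → ZMod ℓ) := Multiplicative.ofAdd v with hu
    have hw : (ι g₀) u * u⁻¹ = w := by
      apply Multiplicative.toAdd.injective
      simpa [hu, ← hTapp, sub_eq_add_neg] using hv
    have heq : (SemidirectProduct.inl w : G) =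
        SemidirectProduct.inr g₀ * (SemidirectProduct.inl u * (SemidirectProduct.inr g₀)⁻¹ *
          (SemidirectProduct.inl u)⁻¹) := by
      rw [← hw, map_mul]
      rw [SemidirectProduct.inl_aut]
      simp [map_inv, mul_assoc]
    rw [heq]
    exact N.mul_mem (hinr g₀)
      (hN.conj_mem _ (N.inv_mem (hinr g₀)) (SemidirectProduct.inl u))
  rw [eq_top_iff]
  intro x _
  rw [← SemidirectProduct.inl_left_mul_inr_right x]
  exact N.mul_mem (hinl x.left) (hinr x.right)
end
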